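/- There exists a constant C > 0 such that for every n ∈ ℕ (n ≥ 2) there exists a density 𝔣: I_n → [0,∞) with ∑_{m=0}^n 𝔣(m) π_n(m) = 1, 𝔥_n(𝔣|π_n) > 0, and 𝔇_n^bd(𝔣;π_n) ≤ C n^{-1/2} 𝔥_n(𝔣|π_n); that is, the logarithmic Sobolev constant λ_n = inf{ 𝔇_n^bd(𝔣;π_n)/𝔥_n(𝔣|π_n) : 𝔣 a density with respect to π_n, 𝔥_n(𝔣|π_n) ≠ 0 } satisfies λ_n ≤ C n^{-1/2}. -/

import Mathlib

open Real Filter Finset MeasureTheory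
open scoped Classical BigOperators NNReal

noncomputable section

/-- Configurations of the exclusion–Glauber process on the discrete torus `ℤ/nℤ`. -/
abbrev Cfg (n : ℕ) := Fin n → Bool

/-- Cyclic successor `x+1` on the discrete torus. -/
def fsucc {n : ℕ} (x : Fin n) : Fin n := ⟨(x.1 + 1) % n, Nat.mod_lt _ x.pos⟩

/-- Cyclic predecessor `x-1` on the discrete torus. -/
def fpred {n : ℕ} (x : Fin n) : Fin n := ⟨(x.1 + n - 1) % n, Nat.mod_lt _ x.pos⟩

/-- `η^{x,x+1}` : exchange the occupation variables at `x` and `x+1`. -/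
def swapCfg {n : ℕ} (η : Cfg n) (x : Fin n) : Cfg n :=
  fun y => if y = x then η (fsucc x) else if y = fsucc x then η x else η y

/-- `η^x` : flip the occupation variable at `x`. -/
def flipCfg {n : ℕ} (η : Cfg n) (x : Fin n) : Cfg n :=
  Function.update η x (! η x)

/-- Occupation variable `η(x) ∈ {0,1}` as a real number. -/
def occ {n : ℕ} (η : Cfg n) (x : Fin n) : ℝ := if η x then 1 else 0

/-- Spin variable `σ(x) = 2η(x) - 1`. -/
def spin {n : ℕ} (η : Cfg n) (x : Fin n) : ℝ := 2 * occ η x - 1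

/-- `γ_n = (1 - θ/√n)/2`. -/
def gam (θ : ℝ) (n : ℕ) : ℝ := (1 - θ / Real.sqrt n) / 2

/-- Glauber jump rates `c_x(η)`. -/
def cRate (θ : ℝ) {n : ℕ} (η : Cfg n) (x : Fin n) : ℝ :=
  1 - gam θ n * spin η x * (spin η (fpred x) + spin η (fsucc x))
    + gam θ n ^ 2 * spin η (fpred x) * spin η (fsucc x)

/-- Exclusion generator. -/
def LexGen {n : ℕ} (f : Cfg n → ℝ) (η : Cfg n) : ℝ :=
  ∑ x, (f (swapCfg η x) - f η)

/-- Glauber generator. -/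
def LG (θ : ℝ) {n : ℕ} (f : Cfg n → ℝ) (η : Cfg n) : ℝ :=
  ∑ x, cRate θ η x * (f (flipCfg η x) - f η)

/-- Full generator `L_n = n² L_n^ex + a L_n^G`. -/
def Lfull (θ a : ℝ) {n : ℕ} (f : Cfg n → ℝ) (η : Cfg n) : ℝ :=
  (n : ℝ) ^ 2 * LexGen f η + a * LG θ f η

/-- `μ` is an invariant (stationary) probability measure for `L_n`. -/
def IsStationaryLn (θ a : ℝ) (n : ℕ) (μ : Cfg n → ℝ) : Prop :=
  (∀ η, 0 ≤ μ η) ∧ (∑ η, μ η = 1) ∧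
    ∀ f : Cfg n → ℝ, ∑ η, Lfull θ a f η * μ η = 0

/-- Rescaled total magnetization `Y^n = n^{-3/4} ∑_x (η(x) - 1/2)`. -/
def magY (n : ℕ) (η : Cfg n) : ℝ :=
  (n : ℝ) ^ (-(3 : ℝ) / 4) * ∑ x, (occ η x - 1 / 2)

/-- The quartic potential `V(y) = θ y² + y⁴/2`. -/
def Vpot (θ : ℝ) (y : ℝ) : ℝ := θ * y ^ 2 + y ^ 4 / 2

/-- Normalization `Z = ∫ e^{-2V}`. -/
def Zconst (θ : ℝ) : ℝ := ∫ y : ℝ, Real.exp (-2 * Vpot θ y)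

/-- The function `U`. -/
def Ufun (θ : ℝ) (n : ℕ) (ϱ : ℝ) : ℝ :=
  (gam θ n)⁻¹ * ((1 + 2 * gam θ n * ϱ) * Real.log (1 + 2 * gam θ n * ϱ)
    + (1 - 2 * gam θ n * ϱ) * Real.log (1 - 2 * gam θ n * ϱ))

/-- `U_0(ρ) = U(ρ - 1/2)`. -/
def U0 (θ : ℝ) (n : ℕ) (ρ : ℝ) : ℝ := Ufun θ n (ρ - 1 / 2)

/-- Total magnetization `m̄_n(η) = ∑_x (η(x) - 1/2)`. -/
def mbar {n : ℕ} (η : Cfg n) : ℝ := ∑ x, (occ η x - 1 / 2)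

/-- Uniform measure on `Ω_n`. -/
def nuHalf (n : ℕ) (_ : Cfg n) : ℝ := 1 / 2 ^ n

/-- Normalizing constant `Z_U^n`. -/
def ZU (θ : ℝ) (n : ℕ) : ℝ :=
  ∑ η : Cfg n, Real.exp (n * Ufun θ n (mbar η / n)) * nuHalf n η

/-- The tilted reference measure `ν_U^n`. -/
def nuU (θ : ℝ) (n : ℕ) (η : Cfg n) : ℝ :=
  (ZU θ n)⁻¹ * Real.exp (n * Ufun θ n (mbar η / n)) * nuHalf n η

/-- Relative entropy `H_n(f | ν_U^n) = ∫ f log f dν_U^n`. -/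
def entU (θ : ℝ) (n : ℕ) (f : Cfg n → ℝ) : ℝ :=
  ∑ η, f η * Real.log (f η) * nuU θ n η

/-- Exclusion Dirichlet form `D_n^ex(f; ν_U^n)`. -/
def Dex (θ : ℝ) (n : ℕ) (f : Cfg n → ℝ) : ℝ :=
  (1 / 2) * ∑ x, ∑ η, (Real.sqrt (f (swapCfg η x)) - Real.sqrt (f η)) ^ 2 * nuU θ n η

/-- Glauber Dirichlet form `D_n^G(f; ν_U^n)`. -/
def DG (θ : ℝ) (n : ℕ) (f : Cfg n → ℝ) : ℝ :=
  (1 / 2) * ∑ x, ∑ η, cRate θ η x * (Real.sqrt (f (flipCfg η x)) - Real.sqrt (f η)) ^ 2 * nuU θ n η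

/-- `f` is a probability density with respect to `ν_U^n`. -/
def IsDensity (θ : ℝ) (n : ℕ) (f : Cfg n → ℝ) : Prop :=
  (∀ η, 0 ≤ f η) ∧ ∑ η, f η * nuU θ n η = 1

/-- Number of particles of a configuration. -/
def ones {n : ℕ} (η : Cfg n) : ℕ := ∑ x, if η x then 1 else 0

/-- `Ω_{n,m}`: configurations with exactly `m` particles. -/
def levelSet (n m : ℕ) : Finset (Cfg n) := Finset.univ.filter fun η => ones η = m

/-- Average `⟨f⟩` with respect to the uniform measure on `Ω_{n,m}`. -/
def avgLevel {n : ℕ} (f : Cfg n → ℝ) (m : ℕ) : ℝ :=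
  (∑ η ∈ levelSet n m, f η) / (levelSet n m).card

/-- `π_n(m) = ν_U^n(Ω_{n,m})`. -/
def piBD (θ : ℝ) (n m : ℕ) : ℝ := ∑ η ∈ levelSet n m, nuU θ n η

/-- Birth rate `b_n(m)`. -/
def bBD (θ : ℝ) (n m : ℕ) : ℝ :=
  ((n : ℝ) - m) * Real.exp (n * (U0 θ n (((m : ℝ) + 1) / n) - U0 θ n ((m : ℝ) / n)) / 2)

/-- Death rate `d_n(m)`. -/
def dBD (θ : ℝ) (n m : ℕ) : ℝ :=
  (m : ℝ) * Real.exp (n * (U0 θ n (((m : ℝ) - 1) / n) - U0 θ n ((m : ℝ) / n)) / 2)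

/-- Relative entropy for the birth–death chain. -/
def entBD (θ : ℝ) (n : ℕ) (g : ℕ → ℝ) : ℝ :=
  ∑ m ∈ Finset.range (n + 1), g m * Real.log (g m) * piBD θ n m

/-- Dirichlet form of the birth–death chain. -/
def DBD (θ : ℝ) (n : ℕ) (g : ℕ → ℝ) : ℝ :=
  (1 / 2) * ∑ m ∈ Finset.range n,
    bBD θ n m * (Real.sqrt (g (m + 1)) - Real.sqrt (g m)) ^ 2 * piBD θ n m

/-- `π_n({l,…,n})`. -/
def piTail (θ : ℝ) (n l : ℕ) : ℝ := ∑ k ∈ Finset.Icc l n, piBD θ n k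

/-- `π_n({0,…,l})`. -/
def piHead (θ : ℝ) (n l : ℕ) : ℝ := ∑ k ∈ Finset.Icc 0 l, piBD θ n k

/-- `E(ρ) = ρ log ρ + (1-ρ) log(1-ρ) + log 2`. -/
def Efun (ρ : ℝ) : ℝ := ρ * Real.log ρ + (1 - ρ) * Real.log (1 - ρ) + Real.log 2

/-- `W = E - U_0`. -/
def Wfun (θ : ℝ) (n : ℕ) (ρ : ℝ) : ℝ := Efun ρ - U0 θ n ρ

/-- `Ψ(x) = -x log x`. -/
def Psi (x : ℝ) : ℝ := -x * Real.log x

/-! ### Auxiliary lemmas -/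

lemma aux_ZU_pos (θ : ℝ) (n : ℕ) : 0 < ZU θ n := by
  unfold ZU
  apply Finset.sum_pos
  · intro η _
    unfold nuHalf
    positivity
  · exact ⟨fun _ => false, Finset.mem_univ _⟩

lemma aux_nuU_pos (θ : ℝ) (n : ℕ) (η : Cfg n) : 0 < nuU θ n η := by
  unfold nuU nuHalf
  have := aux_ZU_pos θ n
  positivity

lemma aux_ones_eq_card {n : ℕ} (η : Cfg n) :
    ones η = (Finset.univ.filter fun x => η x = true).card := by
  rw [Finset.card_filter]
  rfl

lemma aux_ones_le {n : ℕ} (η : Cfg n) : ones η ≤ n := by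
  rw [aux_ones_eq_card]
  calc (Finset.univ.filter fun x => η x = true).card ≤ Finset.univ.card :=
        Finset.card_filter_le _ _
    _ = n := by simp

lemma aux_card_levelSet (n m : ℕ) : (levelSet n m).card = n.choose m := by
  have : (levelSet n m).card = (Finset.powersetCard m (Finset.univ : Finset (Fin n))).card := by
    apply Finset.card_nbij (fun η => Finset.univ.filter fun x => η x = true)
    · intro η hη
      rw [Finset.mem_coe, Finset.mem_powersetCard]
      refine ⟨Finset.filter_subset _ _, ?_⟩
      rw [← aux_ones_eq_card]
      simpa [levelSet] using hη
    · intro η _ η' _ h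
      funext x
      have hx := Finset.ext_iff.mp h x
      simp only [Finset.mem_filter, Finset.mem_univ, true_and] at hx
      exact Bool.eq_iff_iff.mpr hx
    · intro s hs
      rw [Finset.mem_coe, Finset.mem_powersetCard] at hs
      have hfil : (Finset.univ.filter fun x => (decide (x ∈ s)) = true) = s := by
        ext x; simp
      refine ⟨fun x => decide (x ∈ s), ?_, ?_⟩
      · rw [Finset.mem_coe]
        simp only [levelSet, Finset.mem_filter, Finset.mem_univ, true_and]
        rw [aux_ones_eq_card, hfil, hs.2]
      · exact hfil
  rw [this, Finset.card_powersetCard]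
  simp

lemma aux_levelSet_nonempty {n m : ℕ} (hm : m ≤ n) : (levelSet n m).Nonempty := by
  rw [← Finset.card_pos, aux_card_levelSet]
  exact Nat.choose_pos hm

lemma aux_mbar_eq {n m : ℕ} {η : Cfg n} (hη : η ∈ levelSet n m) :
    mbar η = (m : ℝ) - n / 2 := by
  have hm : ones η = m := by simpa [levelSet] using hη
  unfold mbar
  rw [Finset.sum_sub_distrib]
  have h1 : ∑ x : Fin n, occ η x = (m : ℝ) := by
    rw [← hm]
    unfold ones occ
    push_cast
    rfl
  have h2 : ∑ _x : Fin n, (1 / 2 : ℝ) = (n : ℝ) / 2 := by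
    rw [Finset.sum_const]
    simp only [Finset.card_univ, Fintype.card_fin, nsmul_eq_mul]
    ring
  rw [h1, h2]

lemma aux_nuU_eq {n m : ℕ} (θ : ℝ) (hn : 0 < n) {η : Cfg n} (hη : η ∈ levelSet n m) :
    nuU θ n η = (ZU θ n)⁻¹ * Real.exp (n * U0 θ n ((m : ℝ) / n)) * (1 / 2 ^ n) := by
  unfold nuU nuHalf
  rw [aux_mbar_eq hη]
  have hne : (n : ℝ) ≠ 0 := Nat.cast_ne_zero.mpr hn.ne'
  have h12 : (n : ℝ) / 2 / (n : ℝ) = 1 / 2 := by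
    rw [div_div, mul_comm, ← div_div, div_self hne]
  have harg : ((m : ℝ) - (n : ℝ) / 2) / (n : ℝ) = (m : ℝ) / n - 1 / 2 := by
    rw [sub_div, h12]
  rw [harg]
  rfl

lemma aux_piBD_eq (θ : ℝ) {n : ℕ} (hn : 0 < n) (m : ℕ) :
    piBD θ n m = (n.choose m : ℝ) * ((ZU θ n)⁻¹ * Real.exp (n * U0 θ n ((m : ℝ) / n)) * (1 / 2 ^ n)) := by
  unfold piBD
  rw [Finset.sum_congr rfl (fun η hη => aux_nuU_eq θ hn hη), Finset.sum_const,
    aux_card_levelSet, nsmul_eq_mul]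

lemma aux_piBD_pos (θ : ℝ) {n m : ℕ} (hn : 0 < n) (hm : m ≤ n) : 0 < piBD θ n m := by
  rw [aux_piBD_eq θ hn]
  have h1 : (0:ℝ) < n.choose m := by exact_mod_cast Nat.choose_pos hm
  have := aux_ZU_pos θ n
  positivity

lemma aux_piBD_nonneg (θ : ℝ) (n m : ℕ) : 0 ≤ piBD θ n m :=
  Finset.sum_nonneg fun η _ => (aux_nuU_pos θ n η).le

lemma aux_sum_piBD (θ : ℝ) (n : ℕ) : ∑ m ∈ Finset.range (n + 1), piBD θ n m = 1 := by
  have h : ∑ m ∈ Finset.range (n + 1), piBD θ n m = ∑ η : Cfg n, nuU θ n η := by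
    unfold piBD levelSet
    exact Finset.sum_fiberwise_of_maps_to
      (fun η _ => Finset.mem_range.mpr (Nat.lt_succ_of_le (aux_ones_le η))) _
  rw [h]
  unfold nuU
  simp only [mul_assoc]
  rw [← Finset.mul_sum]
  exact inv_mul_cancel₀ (aux_ZU_pos θ n).ne'

lemma aux_Ufun_neg (θ : ℝ) (n : ℕ) (y : ℝ) : Ufun θ n (-y) = Ufun θ n y := by
  unfold Ufun
  rw [show 1 + 2 * gam θ n * (-y) = 1 - 2 * gam θ n * y by ring,
    show 1 - 2 * gam θ n * (-y) = 1 + 2 * gam θ n * y by ring]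
  ring

lemma aux_ones_not {n : ℕ} (η : Cfg n) : ones (fun x => !(η x)) = n - ones η := by
  have h : ones (fun x => !(η x)) + ones η = n := by
    unfold ones
    rw [← Finset.sum_add_distrib]
    have : ∀ x : Fin n, ((if (!(η x)) then 1 else 0) + if η x then 1 else 0) = 1 := by
      intro x; cases h : η x <;> simp [h]
    rw [Finset.sum_congr rfl (fun x _ => this x)]
    simp
  omega

lemma aux_mbar_not {n : ℕ} (η : Cfg n) : mbar (fun x => !(η x)) = -mbar η := by
  unfold mbar
  rw [← Finset.sum_neg_distrib]
  congr 1
  funext x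
  unfold occ
  cases h : η x <;> simp [h] <;> ring

lemma aux_piBD_symm (θ : ℝ) {n m : ℕ} (hm : m ≤ n) : piBD θ n (n - m) = piBD θ n m := by
  unfold piBD
  apply Finset.sum_nbij' (fun η => fun x => !(η x)) (fun η => fun x => !(η x))
  · intro η hη
    simp only [levelSet, Finset.mem_filter, Finset.mem_univ, true_and] at hη ⊢
    rw [aux_ones_not, hη]
    omega
  · intro η hη
    simp only [levelSet, Finset.mem_filter, Finset.mem_univ, true_and] at hη ⊢
    rw [aux_ones_not, hη]
  · intro η _; funext x; simp
  · intro η _; funext x; simp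
  · intro η _
    have : nuU θ n (fun x => !(η x)) = nuU θ n η := by
      unfold nuU
      rw [aux_mbar_not, show -mbar η / (n:ℝ) = -(mbar η / n) by ring, aux_Ufun_neg]
      rfl
    exact this.symm
/-! ### Constants -/

def auxc8 (θ : ℝ) : ℝ := 48 * (|θ| + 21)

def auxcE (θ : ℝ) : ℝ := 2 * auxc8 θ + 40

noncomputable def auxCF (θ : ℝ) : ℝ := Real.exp (4 * auxcE θ)

def auxn0 (θ : ℝ) : ℕ := (2100 * (⌈|θ|⌉₊ + 21)) ^ 4

/-! ### Elementary inequalities -/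

lemma aux_log_ge {z : ℝ} (hz : 0 < z) : 1 - 1 / z ≤ Real.log z := by
  have h := Real.log_le_sub_one_of_pos (inv_pos.mpr hz)
  rw [Real.log_inv] at h
  have hz' : (1 : ℝ) / z = z⁻¹ := one_div z
  linarith [h, hz'.le, hz'.ge]

lemma aux_exp_neg_le {y : ℝ} (h0 : 0 ≤ y) (h2 : y ≤ 1 / 2) : Real.exp (-(2 * y)) ≤ 1 - y := by
  have key : 1 ≤ (1 - y) * Real.exp (2 * y) := by nlinarith [Real.add_one_le_exp (2 * y)]
  have h3 : Real.exp (-(2 * y)) * Real.exp (2 * y) = 1 := by rw [← Real.exp_add]; norm_num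
  nlinarith [Real.exp_pos (2 * y), Real.exp_pos (-(2 * y))]

lemma aux_psi_bounds {t δ : ℝ} (ht : 0 < t) (hδ : 0 < δ) :
    δ * (Real.log t + 1) ≤ (t + δ) * Real.log (t + δ) - t * Real.log t ∧
    (t + δ) * Real.log (t + δ) - t * Real.log t ≤ δ * (Real.log t + 1) + δ ^ 2 / t := by
  have htδ : 0 < t + δ := by linarith
  have hdivpos : 0 < (t + δ) / t := div_pos htδ ht
  have hsplit : (t + δ) * Real.log (t + δ) - t * Real.log t
      = (t + δ) * Real.log ((t + δ) / t) + δ * Real.log t := by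
    rw [Real.log_div htδ.ne' ht.ne']; ring
  have hup : Real.log ((t + δ) / t) ≤ δ / t := by
    have h := Real.log_le_sub_one_of_pos hdivpos
    have e : (t + δ) / t - 1 = δ / t := by field_simp; ring
    linarith
  have hlo : δ / (t + δ) ≤ Real.log ((t + δ) / t) := by
    have h := aux_log_ge hdivpos
    have e : 1 - 1 / ((t + δ) / t) = δ / (t + δ) := by
      rw [one_div_div]; field_simp; ring
    linarith
  have m1 : (t + δ) * (δ / (t + δ)) ≤ (t + δ) * Real.log ((t + δ) / t) :=
    mul_le_mul_of_nonneg_left hlo htδ.le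
  have m2 : (t + δ) * Real.log ((t + δ) / t) ≤ (t + δ) * (δ / t) :=
    mul_le_mul_of_nonneg_left hup htδ.le
  have e1 : (t + δ) * (δ / (t + δ)) = δ := by field_simp
  have e2 : (t + δ) * (δ / t) = δ + δ ^ 2 / t := by field_simp
  constructor
  · rw [hsplit]; nlinarith
  · rw [hsplit]; nlinarith

/-! ### The one-step ratio identity -/

lemma aux_ratio_id (θ : ℝ) {n : ℕ} (hn : 0 < n) {m : ℕ} (hm : m < n) :
    piBD θ n (m + 1) * ((m : ℝ) + 1)
      = piBD θ n m * ((n : ℝ) - m)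
          * Real.exp ((n : ℝ) * (U0 θ n (((m : ℝ) + 1) / n) - U0 θ n ((m : ℝ) / n))) := by
  rw [aux_piBD_eq θ hn, aux_piBD_eq θ hn]
  have hch : ((n.choose (m + 1) : ℕ) : ℝ) * ((m : ℝ) + 1)
      = ((n.choose m : ℕ) : ℝ) * ((n : ℝ) - m) := by
    have h := Nat.choose_succ_right_eq n m
    have hcast : (((n.choose (m + 1)) * (m + 1) : ℕ) : ℝ) = ((n.choose m * (n - m) : ℕ) : ℝ) := by
      exact_mod_cast congrArg (Nat.cast (R := ℝ)) h
    push_cast [Nat.cast_sub hm.le] at hcast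
    linarith
  have hexp : Real.exp ((n : ℝ) * U0 θ n (((m + 1 : ℕ) : ℝ) / n))
      = Real.exp ((n : ℝ) * U0 θ n ((m : ℝ) / n))
        * Real.exp ((n : ℝ) * (U0 θ n (((m : ℝ) + 1) / n) - U0 θ n ((m : ℝ) / n))) := by
    rw [← Real.exp_add]
    congr 1
    push_cast
    ring
  rw [hexp]
  linear_combination ((ZU θ n)⁻¹ * Real.exp ((n : ℝ) * U0 θ n ((m : ℝ) / n))
    * Real.exp ((n : ℝ) * (U0 θ n (((m : ℝ) + 1) / n) - U0 θ n ((m : ℝ) / n))) * (1 / 2 ^ n)) * hch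
/-! ### Small numeric lemmas (externalized to keep contexts small) -/

lemma aux_c8_nonneg (θ : ℝ) : 0 ≤ auxc8 θ := by unfold auxc8; positivity

lemma aux_cE_pos (θ : ℝ) : 0 < auxcE θ := by
  unfold auxcE; nlinarith [aux_c8_nonneg θ]

lemma aux_num1 {A t : ℝ} (hA : 0 ≤ A) (h : 2100 * (A + 21) ≤ t) : (44100 : ℝ) ≤ t := by
  nlinarith

lemma aux_num2 {A t : ℝ} (hA : 0 ≤ A) (h : 2100 * (A + 21) ≤ t) (ht0 : 0 < t) :
    2 * A ≤ t ^ 2 := by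
  nlinarith [mul_le_mul_of_nonneg_left h ht0.le]

lemma aux_beta_bounds {θ t : ℝ} (ht0 : 0 < t) (hta : 2100 * (|θ| + 21) ≤ t) :
    1 / 2 ≤ 1 - θ / t ^ 2 ∧ 1 - θ / t ^ 2 ≤ 3 / 2 := by
  have ht2 : (0 : ℝ) < t ^ 2 := by positivity
  have h2 := aux_num2 (abs_nonneg θ) hta ht0
  constructor
  · have h1 : θ / t ^ 2 ≤ 1 / 2 := by
      rw [div_le_iff₀ ht2]
      nlinarith [le_abs_self θ]
    linarith
  · have h1 : -(1 / 2) ≤ θ / t ^ 2 := by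
      rw [le_div_iff₀ ht2]
      nlinarith [neg_le_abs θ]
    linarith

lemma aux_prod14 {β ϱ w : ℝ} (hβ0 : 0 ≤ β) (hβhi : β ≤ 3 / 2) (hϱ0 : 0 ≤ ϱ)
    (hϱw : ϱ ≤ 3 * w) (hw : 0 ≤ w) (hwsm : w ≤ 1 / 44100) : β * ϱ ≤ 1 / 4 := by
  nlinarith

lemma aux_b1 {θ ϱ w : ℝ} (hϱ0 : 0 ≤ ϱ) (hϱw : ϱ ≤ 3 * w) (hw0 : 0 < w) :
    -(3 * (|θ| * w ^ 3)) ≤ ϱ * (θ * w ^ 2) ∧ ϱ * (θ * w ^ 2) ≤ 3 * (|θ| * w ^ 3) := by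
  have habs : 0 ≤ |θ| := abs_nonneg θ
  constructor
  · nlinarith [mul_le_mul_of_nonneg_right hϱw (mul_nonneg habs (sq_nonneg w)),
      mul_le_mul_of_nonneg_left (neg_le_abs θ) (mul_nonneg hϱ0 (sq_nonneg w)),
      mul_nonneg hϱ0 (mul_nonneg habs (sq_nonneg w))]
  · nlinarith [mul_le_mul_of_nonneg_right hϱw (mul_nonneg habs (sq_nonneg w)),
      mul_le_mul_of_nonneg_left (le_abs_self θ) (mul_nonneg hϱ0 (sq_nonneg w))]

lemma aux_b2 {β ϱ w : ℝ} (hβ0 : 0 ≤ β) (hβhi : β ≤ 3 / 2) (hϱ0 : 0 ≤ ϱ)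
    (hϱw : ϱ ≤ 3 * w) (hw0 : 0 < w) : β ^ 2 * ϱ ^ 3 ≤ (9 / 4) * (27 * w ^ 3) := by
  have hϱ3 : ϱ ^ 3 ≤ (3 * w) ^ 3 := pow_le_pow_left₀ hϱ0 hϱw 3
  have hβ2 : β ^ 2 ≤ 9 / 4 := by nlinarith
  nlinarith [pow_nonneg hϱ0 3, pow_nonneg hw0.le 3]

lemma aux_q2lo {β ϱ : ℝ} (hβϱ0 : 0 ≤ β * ϱ) (hβϱ : β * ϱ ≤ 1 / 4) (hϱ0 : 0 ≤ ϱ) :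
    (9 : ℝ) / 16 ≤ (1 + 2 * ϱ) * (1 - β * ϱ) ^ 2 := by nlinarith

lemma aux_c8w {θ w : ℝ} (hw0 : 0 ≤ w) (hw1 : w ≤ 1)
    (hwc : (|θ| + 21) * w ≤ 1 / 2100) : auxc8 θ * w ^ 3 ≤ 1 / 2 := by
  unfold auxc8
  nlinarith [mul_le_mul_of_nonneg_right hwc (mul_self_nonneg w), abs_nonneg θ,
    mul_self_nonneg w]

lemma aux_Rv_bounds (θ : ℝ) {β ϱ w : ℝ} (hw0 : 0 < w) (hwsm : w ≤ 1 / 44100)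
    (hϱ0 : 0 ≤ ϱ) (hϱw : ϱ ≤ 3 * w) (hβlo : 1 / 2 ≤ β) (hβhi : β ≤ 3 / 2)
    (hβ1 : β - 1 = -(θ * w ^ 2)) (hβϱ0 : 0 ≤ β * ϱ) (hβϱ : β * ϱ ≤ 1 / 4) :
    (1 - auxc8 θ * w ^ 3) * ((1 + 2 * ϱ) * (1 - β * ϱ) ^ 2) ≤ (1 - 2 * ϱ) * (1 + β * ϱ) ^ 2
    ∧ (1 - 2 * ϱ) * (1 + β * ϱ) ^ 2
        ≤ (1 + auxc8 θ * w ^ 3) * ((1 + 2 * ϱ) * (1 - β * ϱ) ^ 2) := by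
  have habs : 0 ≤ |θ| := abs_nonneg θ
  have hkey : (1 + 2 * ϱ) * (1 - β * ϱ) ^ 2 - (1 - 2 * ϱ) * (1 + β * ϱ) ^ 2
      = 4 * (ϱ * (θ * w ^ 2)) + 4 * (β ^ 2 * ϱ ^ 3) := by
    have e : (1 + 2 * ϱ) * (1 - β * ϱ) ^ 2 - (1 - 2 * ϱ) * (1 + β * ϱ) ^ 2
        = -(4 * (ϱ * (β - 1))) + 4 * (β ^ 2 * ϱ ^ 3) := by ring
    rw [e, hβ1]; ring
  have hb1 := aux_b1 (θ := θ) hϱ0 hϱw hw0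
  have hb2 := aux_b2 (hβ0 := by linarith) hβhi hϱ0 hϱw hw0
  have hb2' : 0 ≤ β ^ 2 * ϱ ^ 3 := by positivity
  have hq2 := aux_q2lo hβϱ0 hβϱ hϱ0
  have hc8 : 0 ≤ auxc8 θ * w ^ 3 := by unfold auxc8; positivity
  have hprod : (auxc8 θ * w ^ 3) * (9 / 16) ≤ (auxc8 θ * w ^ 3) * ((1 + 2 * ϱ) * (1 - β * ϱ) ^ 2) :=
    mul_le_mul_of_nonneg_left hq2 hc8
  have hc8e : auxc8 θ * w ^ 3 = 48 * (|θ| * w ^ 3) + 1008 * w ^ 3 := by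
    unfold auxc8; ring
  constructor
  · nlinarith [hb1.2, pow_nonneg hw0.le 3]
  · nlinarith [hb1.1, pow_nonneg hw0.le 3]

/-! ### The core one-step estimate -/

set_option maxHeartbeats 1000000 in
lemma aux_core (θ : ℝ) (n m : ℕ) (t : ℝ) (ht : t = (n : ℝ) ^ ((1 : ℝ) / 4))
    (hta : 2100 * (|θ| + 21) ≤ t)
    (hm1 : (n : ℝ) / 2 ≤ (m : ℝ)) (hm2 : (m : ℝ) ≤ (n : ℝ) / 2 + 1 / 2 + 2 * t ^ 3) :
    (((n : ℝ) - m) / ((m : ℝ) + 1))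
        * Real.exp ((n : ℝ) * (U0 θ n (((m : ℝ) + 1) / n) - U0 θ n ((m : ℝ) / n)))
        ≤ Real.exp (auxcE θ / t ^ 3)
    ∧ Real.exp (-(auxcE θ / t ^ 3))
        ≤ (((n : ℝ) - m) / ((m : ℝ) + 1))
            * Real.exp ((n : ℝ) * (U0 θ n (((m : ℝ) + 1) / n) - U0 θ n ((m : ℝ) / n)))
    ∧ bBD θ n m ≤ 9 * (n : ℝ) := by
  have habs : 0 ≤ |θ| := abs_nonneg θ
  have ht1 : (44100 : ℝ) ≤ t := aux_num1 habs hta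
  have ht0 : (0 : ℝ) < t := by linarith
  have ht2 : (0 : ℝ) < t ^ 2 := by positivity
  have ht3 : (1 : ℝ) ≤ t ^ 3 := by nlinarith
  have hx4 : ((n : ℝ)) = t ^ 4 := by
    rw [ht, ← Real.rpow_natCast ((n : ℝ) ^ ((1 : ℝ) / 4)) 4,
      ← Real.rpow_mul (Nat.cast_nonneg n)]
    norm_num
  have hx0 : (0 : ℝ) < (n : ℝ) := by rw [hx4]; positivity
  -- the small parameter w = 1/t
  obtain ⟨w, hwdef⟩ : ∃ w : ℝ, w = t⁻¹ := ⟨_, rfl⟩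
  have hw0 : 0 < w := by rw [hwdef]; exact inv_pos.mpr ht0
  have hwt : w * t = 1 := by rw [hwdef]; exact inv_mul_cancel₀ ht0.ne'
  have hwsm : w ≤ 1 / 44100 := by
    rw [hwdef, ← one_div]
    exact one_div_le_one_div_of_le (by norm_num) ht1
  have hw1 : w ≤ 1 := by linarith
  have hwc : (|θ| + 21) * w ≤ 1 / 2100 := by
    linarith [mul_le_mul_of_nonneg_left hta hw0.le, hwt]
  have hwt4 : w ^ 4 * t ^ 4 = 1 := by rw [← mul_pow, hwt]; norm_num
  have hw4w : w ^ 4 ≤ w := pow_le_of_le_one hw0.le hw1 (by norm_num)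
  have hw43 : w ^ 4 ≤ w ^ 3 := pow_le_pow_of_le_one hw0.le hw1 (by norm_num)
  have hw30 : (0:ℝ) ≤ w ^ 3 := by positivity
  have hw40 : (0:ℝ) ≤ w ^ 4 := by positivity
  -- β
  have hsq : Real.sqrt (n : ℝ) = t ^ 2 := by
    rw [Real.sqrt_eq_rpow, ht, ← Real.rpow_natCast ((n : ℝ) ^ ((1 : ℝ) / 4)) 2,
      ← Real.rpow_mul (Nat.cast_nonneg n)]
    norm_num
  obtain ⟨β, hβdef⟩ : ∃ β : ℝ, β = 1 - θ / t ^ 2 := ⟨_, rfl⟩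
  have h2γ : 2 * gam θ n = β := by unfold gam; rw [hsq, hβdef]; ring
  have hγβ : gam θ n = β / 2 := by unfold gam; rw [hsq, hβdef]
  have hβbounds := aux_beta_bounds ht0 hta
  have hβlo : (1 : ℝ) / 2 ≤ β := by rw [hβdef]; exact hβbounds.1
  have hβhi : β ≤ 3 / 2 := by rw [hβdef]; exact hβbounds.2
  have hβ0 : (0 : ℝ) < β := by linarith
  have hβne : β ≠ 0 := hβ0.ne'
  have hθw2 : θ / t ^ 2 = θ * w ^ 2 := by
    rw [hwdef]
    field_simp
  have hβ1 : β - 1 = -(θ * w ^ 2) := by rw [hβdef, hθw2]; ring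
  -- ϱ
  obtain ⟨ϱ, hϱdef⟩ : ∃ ϱ : ℝ, ϱ = (m : ℝ) / (n : ℝ) - 1 / 2 := ⟨_, rfl⟩
  have hϱ0 : 0 ≤ ϱ := by
    rw [hϱdef, sub_nonneg, le_div_iff₀ hx0]
    linarith
  have hϱw : ϱ ≤ 3 * w := by
    rw [hϱdef, sub_le_iff_le_add, div_le_iff₀ hx0]
    have e : (3 * w + 1 / 2) * (n : ℝ) = 3 * (w * t) * t ^ 3 + t ^ 4 / 2 := by
      rw [hx4]; ring
    rw [e, hwt]
    linarith
  have hϱsm : ϱ ≤ 1 / 7 := by linarith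
  have hβϱ0 : 0 ≤ β * ϱ := mul_nonneg hβ0.le hϱ0
  have hβϱ : β * ϱ ≤ 1 / 4 := aux_prod14 hβ0.le hβhi hϱ0 hϱw hw0.le hwsm
  obtain ⟨p, hpdef⟩ : ∃ p : ℝ, p = 1 + β * ϱ := ⟨_, rfl⟩
  obtain ⟨q, hqdef⟩ : ∃ q : ℝ, q = 1 - β * ϱ := ⟨_, rfl⟩
  have hp1 : (1 : ℝ) ≤ p := by rw [hpdef]; linarith
  have hp0 : (0 : ℝ) < p := by linarith
  have hp54 : p ≤ 5 / 4 := by rw [hpdef]; linarith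
  have hq34 : (3 : ℝ) / 4 ≤ q := by rw [hqdef]; linarith
  have hq0 : (0 : ℝ) < q := by linarith
  have hq1 : q ≤ 1 := by rw [hqdef]; linarith
  obtain ⟨δ, hδdef⟩ : ∃ δ : ℝ, δ = β * w ^ 4 := ⟨_, rfl⟩
  have hδ0 : (0 : ℝ) < δ := by rw [hδdef]; positivity
  have hδub : δ ≤ 2 * w ^ 4 := by
    rw [hδdef]
    exact mul_le_mul_of_nonneg_right (by linarith) hw40
  have hδsm : δ ≤ 1 / 100 := by linarith
  have hqδ : (1 : ℝ) / 2 ≤ q - δ := by linarith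
  have hqδ0 : (0 : ℝ) < q - δ := by linarith
  -- rewriting U0
  have hUa : U0 θ n ((m : ℝ) / n) = (gam θ n)⁻¹ * (p * Real.log p + q * Real.log q) := by
    unfold U0 Ufun
    rw [h2γ, ← hϱdef, ← hpdef, ← hqdef]
  have e1 : ((m : ℝ) + 1) / (n : ℝ) - 1 / 2 = ϱ + w ^ 4 := by
    rw [hϱdef, hx4, hwdef]
    field_simp
    ring
  have hUb : U0 θ n (((m : ℝ) + 1) / n)
      = (gam θ n)⁻¹ * ((p + δ) * Real.log (p + δ) + (q - δ) * Real.log (q - δ)) := by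
    unfold U0 Ufun
    rw [h2γ, e1, show 1 + β * (ϱ + w ^ 4) = p + δ by rw [hpdef, hδdef]; ring,
      show 1 - β * (ϱ + w ^ 4) = q - δ by rw [hqdef, hδdef]; ring]
  have hD : (n : ℝ) * (U0 θ n (((m : ℝ) + 1) / n) - U0 θ n ((m : ℝ) / n))
      = (t ^ 4 * (2 / β)) * (((p + δ) * Real.log (p + δ) - p * Real.log p)
          - (q * Real.log q - (q - δ) * Real.log (q - δ))) := by
    rw [hUa, hUb, hγβ, hx4, inv_div]
    ring
  have hc0 : (0 : ℝ) < t ^ 4 * (2 / β) := by positivity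
  have hββ : β * β⁻¹ = 1 := mul_inv_cancel₀ hβne
  have hcoef : (t ^ 4 * (2 / β)) * δ = 2 := by
    calc (t ^ 4 * (2 / β)) * δ = 2 * (w ^ 4 * t ^ 4) * (β * β⁻¹) := by
          rw [hδdef, div_eq_mul_inv]; ring
      _ = 2 := by rw [hwt4, hββ]; norm_num
  have hcd2 : (t ^ 4 * (2 / β)) * δ ^ 2 = 2 * δ := by
    rw [show (t ^ 4 * (2 / β)) * δ ^ 2 = ((t ^ 4 * (2 / β)) * δ) * δ by ring, hcoef]
  -- ψ bounds
  have hψp := aux_psi_bounds hp0 hδ0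
  have hψq := aux_psi_bounds hqδ0 hδ0
  rw [show q - δ + δ = q by ring] at hψq
  -- log (q - δ) versus log q
  have hlogd1 : Real.log (q - δ) ≤ Real.log q := Real.log_le_log hqδ0 (by linarith)
  have hlogd2 : Real.log q - Real.log (q - δ) ≤ 2 * δ := by
    have h := Real.log_le_sub_one_of_pos (div_pos hq0 hqδ0)
    rw [Real.log_div hq0.ne' hqδ0.ne'] at h
    have e : q / (q - δ) - 1 = δ / (q - δ) := by field_simp; ring
    have e2 : δ / (q - δ) ≤ 2 * δ := by
      rw [div_le_iff₀ hqδ0]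
      have h3 := mul_le_mul_of_nonneg_left hqδ (by positivity : (0:ℝ) ≤ 2 * δ)
      linarith
    linarith
  have hd2p : δ ^ 2 / p ≤ δ ^ 2 := div_le_self (sq_nonneg δ) hp1
  have hd2q : δ ^ 2 / (q - δ) ≤ 2 * δ ^ 2 := by
    rw [div_le_iff₀ hqδ0]
    have h3 := mul_le_mul_of_nonneg_left hqδ (by positivity : (0:ℝ) ≤ 2 * δ ^ 2)
    linarith
  have hmul1 : δ * (Real.log q - Real.log (q - δ)) ≤ δ * (2 * δ) :=
    mul_le_mul_of_nonneg_left hlogd2 hδ0.le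
  have hmul3 : δ * Real.log (q - δ) ≤ δ * Real.log q :=
    mul_le_mul_of_nonneg_left hlogd1 hδ0.le
  have hABup : ((p + δ) * Real.log (p + δ) - p * Real.log p)
      - (q * Real.log q - (q - δ) * Real.log (q - δ))
      ≤ δ * (Real.log p - Real.log q) + 3 * δ ^ 2 := by
    linarith [hψp.2, hψq.1, hmul1, hd2p]
  have hABlo : δ * (Real.log p - Real.log q) - 2 * δ ^ 2
      ≤ ((p + δ) * Real.log (p + δ) - p * Real.log p)
        - (q * Real.log q - (q - δ) * Real.log (q - δ)) := by
    linarith [hψp.1, hψq.2, hd2q, hmul3]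
  -- bounds on D
  have hDub : (n : ℝ) * (U0 θ n (((m : ℝ) + 1) / n) - U0 θ n ((m : ℝ) / n))
      ≤ 2 * (Real.log p - Real.log q) + 6 * δ := by
    rw [hD]
    have h := mul_le_mul_of_nonneg_left hABup hc0.le
    have e : (t ^ 4 * (2 / β)) * (δ * (Real.log p - Real.log q) + 3 * δ ^ 2)
        = 2 * (Real.log p - Real.log q) + 6 * δ := by
      rw [mul_add, show (t ^ 4 * (2 / β)) * (δ * (Real.log p - Real.log q))
          = ((t ^ 4 * (2 / β)) * δ) * (Real.log p - Real.log q) by ring, hcoef,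
        show (t ^ 4 * (2 / β)) * (3 * δ ^ 2) = 3 * ((t ^ 4 * (2 / β)) * δ ^ 2) by ring, hcd2]
      ring
    linarith
  have hDlb : 2 * (Real.log p - Real.log q) - 4 * δ
      ≤ (n : ℝ) * (U0 θ n (((m : ℝ) + 1) / n) - U0 θ n ((m : ℝ) / n)) := by
    rw [hD]
    have h := mul_le_mul_of_nonneg_left hABlo hc0.le
    have e : (t ^ 4 * (2 / β)) * (δ * (Real.log p - Real.log q) - 2 * δ ^ 2)
        = 2 * (Real.log p - Real.log q) - 4 * δ := by
      rw [mul_sub, show (t ^ 4 * (2 / β)) * (δ * (Real.log p - Real.log q))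
          = ((t ^ 4 * (2 / β)) * δ) * (Real.log p - Real.log q) by ring, hcoef,
        show (t ^ 4 * (2 / β)) * (2 * δ ^ 2) = 2 * ((t ^ 4 * (2 / β)) * δ ^ 2) by ring, hcd2]
      ring
    linarith
  -- prefactor facts
  have hmm0 : (0 : ℝ) < (m : ℝ) := by
    have : (0 : ℝ) < (n : ℝ) / 2 := by positivity
    linarith
  have hnmeq : (n : ℝ) - m = (n : ℝ) * (1 / 2 - ϱ) := by
    rw [hϱdef]
    field_simp
    ring
  have hmeq : (m : ℝ) = (n : ℝ) * (1 / 2 + ϱ) := by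
    rw [hϱdef]
    field_simp
    ring
  have hnm0 : (0 : ℝ) < (n : ℝ) - m := by
    rw [hnmeq]
    have h : (0 : ℝ) < 1 / 2 - ϱ := by linarith
    positivity
  have hF0 : (0 : ℝ) ≤ ((n : ℝ) - m) / ((m : ℝ) + 1) := by positivity
  have hF_up : ((n : ℝ) - m) / ((m : ℝ) + 1) ≤ ((n : ℝ) - m) / (m : ℝ) :=
    div_le_div_of_nonneg_left hnm0.le hmm0 (by linarith)
  have h12ϱ : (0 : ℝ) < 1 + 2 * ϱ := by linarith
  have hden0 : (0 : ℝ) < (1 + 2 * ϱ) * q ^ 2 := by positivity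
  have hRv : ((n : ℝ) - m) / (m : ℝ) * (p / q) ^ 2
      = ((1 - 2 * ϱ) * p ^ 2) / ((1 + 2 * ϱ) * q ^ 2) := by
    rw [hnmeq, hmeq, div_pow, div_mul_div_comm,
      div_eq_div_iff (by positivity) (by positivity)]
    ring
  have hRvB := aux_Rv_bounds θ hw0 hwsm hϱ0 hϱw hβlo hβhi hβ1 hβϱ0 hβϱ
  rw [← hpdef, ← hqdef] at hRvB
  have hRv_up : ((1 - 2 * ϱ) * p ^ 2) / ((1 + 2 * ϱ) * q ^ 2) ≤ 1 + auxc8 θ * w ^ 3 := by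
    rw [div_le_iff₀ hden0]
    exact hRvB.2
  have hRv_lo : 1 - auxc8 θ * w ^ 3 ≤ ((1 - 2 * ϱ) * p ^ 2) / ((1 + 2 * ϱ) * q ^ 2) := by
    rw [le_div_iff₀ hden0]
    exact hRvB.1
  have hc8w : auxc8 θ * w ^ 3 ≤ 1 / 2 := aux_c8w hw0.le hw1 hwc
  have hc8w0 : 0 ≤ auxc8 θ * w ^ 3 := by
    have := aux_c8_nonneg θ
    positivity
  have hεw : auxcE θ / t ^ 3 = auxcE θ * w ^ 3 := by
    rw [hwdef]
    field_simp
  -- exp of the log difference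
  have hexpL : Real.exp (Real.log p - Real.log q) = p / q := by
    rw [Real.exp_sub, Real.exp_log hp0, Real.exp_log hq0]
  have hexp2L : Real.exp (2 * (Real.log p - Real.log q)) = (p / q) ^ 2 := by
    rw [two_mul, Real.exp_add, hexpL]; ring
  have hpq0 : (0 : ℝ) < p / q := by positivity
  refine ⟨?_, ?_, ?_⟩
  · -- upper bound
    have hexpD : Real.exp ((n : ℝ) * (U0 θ n (((m : ℝ) + 1) / n) - U0 θ n ((m : ℝ) / n)))
        ≤ (p / q) ^ 2 * Real.exp (6 * δ) := by
      have h := Real.exp_le_exp.mpr hDub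
      rw [Real.exp_add, hexp2L] at h
      exact h
    calc ((n : ℝ) - m) / ((m : ℝ) + 1)
          * Real.exp ((n : ℝ) * (U0 θ n (((m : ℝ) + 1) / n) - U0 θ n ((m : ℝ) / n)))
        ≤ ((n : ℝ) - m) / (m : ℝ)
          * ((p / q) ^ 2 * Real.exp (6 * δ)) :=
          mul_le_mul hF_up hexpD (Real.exp_pos _).le (div_nonneg hnm0.le hmm0.le)
      _ = (((n : ℝ) - m) / (m : ℝ) * (p / q) ^ 2) * Real.exp (6 * δ) := by ring
      _ ≤ (1 + auxc8 θ * w ^ 3) * Real.exp (6 * δ) := by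
          rw [hRv]
          exact mul_le_mul_of_nonneg_right hRv_up (Real.exp_pos _).le
      _ ≤ Real.exp (auxc8 θ * w ^ 3) * Real.exp (6 * δ) := by
          apply mul_le_mul_of_nonneg_right _ (Real.exp_pos _).le
          linarith [Real.add_one_le_exp (auxc8 θ * w ^ 3)]
      _ = Real.exp (auxc8 θ * w ^ 3 + 6 * δ) := by rw [← Real.exp_add]
      _ ≤ Real.exp (auxcE θ / t ^ 3) := by
          rw [Real.exp_le_exp, hεw]
          unfold auxcE
          linarith [hc8w0, hδub, hw43, hw30]
  · -- lower bound
    have hP1 : Real.exp (-(2 * (auxc8 θ * w ^ 3))) ≤ 1 - auxc8 θ * w ^ 3 :=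
      aux_exp_neg_le hc8w0 hc8w
    have h2w4 : (0 : ℝ) ≤ 2 * w ^ 4 := by positivity
    have h2w4' : 2 * w ^ 4 ≤ 1 / 2 := by linarith
    have hP2 : Real.exp (-(2 * (2 * w ^ 4))) ≤ 1 - 2 * w ^ 4 :=
      aux_exp_neg_le h2w4 h2w4'
    have hmr : 1 - 2 * w ^ 4 ≤ (m : ℝ) / ((m : ℝ) + 1) := by
      have e : (m : ℝ) / ((m : ℝ) + 1) = 1 - 1 / ((m : ℝ) + 1) := by
        field_simp
        ring
      have hmt : t ^ 4 / 2 ≤ (m : ℝ) + 1 := by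
        rw [← hx4]; linarith
      have h1 : 1 / ((m : ℝ) + 1) ≤ 2 * w ^ 4 := by
        rw [div_le_iff₀ (by linarith)]
        have h2 := mul_le_mul_of_nonneg_left hmt h2w4
        have e2 : 2 * w ^ 4 * (t ^ 4 / 2) = w ^ 4 * t ^ 4 := by ring
        rw [e2, hwt4] at h2
        linarith
      rw [e]; linarith
    have hFsplit : ((n : ℝ) - m) / ((m : ℝ) + 1)
        = (((n : ℝ) - m) / (m : ℝ)) * ((m : ℝ) / ((m : ℝ) + 1)) := by
      rw [div_mul_div_comm, mul_comm ((n : ℝ) - m) (m : ℝ),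
        mul_div_mul_left _ _ hmm0.ne']
    have hexpDlo : (p / q) ^ 2 * Real.exp (-(4 * δ))
        ≤ Real.exp ((n : ℝ) * (U0 θ n (((m : ℝ) + 1) / n) - U0 θ n ((m : ℝ) / n))) := by
      have h := Real.exp_le_exp.mpr hDlb
      rw [show 2 * (Real.log p - Real.log q) - 4 * δ
          = 2 * (Real.log p - Real.log q) + (-(4 * δ)) by ring, Real.exp_add, hexp2L] at h
      exact h
    have hRvnm : 1 - auxc8 θ * w ^ 3 ≤ ((n : ℝ) - m) / (m : ℝ) * (p / q) ^ 2 := by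
      rw [hRv]; exact hRv_lo
    calc Real.exp (-(auxcE θ / t ^ 3))
        ≤ Real.exp (-(2 * (auxc8 θ * w ^ 3)) + (-(2 * (2 * w ^ 4))) + (-(4 * δ))) := by
          rw [Real.exp_le_exp, hεw]
          unfold auxcE
          linarith [hc8w0, hδub, hw43, hw30]
      _ = Real.exp (-(2 * (auxc8 θ * w ^ 3))) * Real.exp (-(2 * (2 * w ^ 4)))
            * Real.exp (-(4 * δ)) := by rw [Real.exp_add, Real.exp_add]
      _ ≤ ((1 - auxc8 θ * w ^ 3) * (1 - 2 * w ^ 4)) * Real.exp (-(4 * δ)) := by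
          apply mul_le_mul_of_nonneg_right _ (Real.exp_pos _).le
          apply mul_le_mul hP1 hP2 (Real.exp_pos _).le (by linarith)
      _ ≤ ((((n : ℝ) - m) / (m : ℝ) * (p / q) ^ 2) * ((m : ℝ) / ((m : ℝ) + 1)))
            * Real.exp (-(4 * δ)) := by
          apply mul_le_mul_of_nonneg_right _ (Real.exp_pos _).le
          apply mul_le_mul hRvnm hmr (by linarith) (by positivity)
      _ = (((n : ℝ) - m) / ((m : ℝ) + 1)) * ((p / q) ^ 2 * Real.exp (-(4 * δ))) := by
          rw [hFsplit]; ring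
      _ ≤ (((n : ℝ) - m) / ((m : ℝ) + 1))
            * Real.exp ((n : ℝ) * (U0 θ n (((m : ℝ) + 1) / n) - U0 θ n ((m : ℝ) / n))) :=
          mul_le_mul_of_nonneg_left hexpDlo hF0
  · -- bound on b
    unfold bBD
    have hD2 : (n : ℝ) * (U0 θ n (((m : ℝ) + 1) / n) - U0 θ n ((m : ℝ) / n)) / 2
        ≤ (Real.log p - Real.log q) + 3 * δ := by linarith
    have hpq53 : p / q ≤ 5 / 3 := by
      rw [div_le_iff₀ hq0]
      linarith
    have hexphalf :
        Real.exp ((n : ℝ) * (U0 θ n (((m : ℝ) + 1) / n) - U0 θ n ((m : ℝ) / n)) / 2) ≤ 5 := by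
      calc Real.exp ((n : ℝ) * (U0 θ n (((m : ℝ) + 1) / n) - U0 θ n ((m : ℝ) / n)) / 2)
          ≤ Real.exp ((Real.log p - Real.log q) + 3 * δ) := Real.exp_le_exp.mpr hD2
        _ = (p / q) * Real.exp (3 * δ) := by rw [Real.exp_add, hexpL]
        _ ≤ (5 / 3) * Real.exp 1 := by
            apply mul_le_mul hpq53 _ (Real.exp_pos _).le (by norm_num)
            rw [Real.exp_le_exp]
            linarith
        _ ≤ 5 := by linarith [Real.exp_one_lt_d9]
    calc ((n : ℝ) - m)
          * Real.exp ((n : ℝ) * (U0 θ n (((m : ℝ) + 1) / n) - U0 θ n ((m : ℝ) / n)) / 2)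
        ≤ (n : ℝ) * 5 :=
          mul_le_mul (by linarith) hexphalf (Real.exp_pos _).le hx0.le
      _ ≤ 9 * (n : ℝ) := by linarith
/-! ### Entropy lower bound -/

lemma aux_tangent (x : ℝ) (hx : 0 ≤ x) : x * Real.log 2 + x - 2 ≤ x * Real.log x := by
  rcases eq_or_lt_of_le hx with h | h
  · rw [← h]; norm_num
  · have h2 : (0 : ℝ) < x / 2 := by positivity
    have h1 := mul_le_mul_of_nonneg_left (aux_log_ge h2) hx
    have e : x * (1 - 1 / (x / 2)) = x - 2 := by field_simp
    have e2 : Real.log (x / 2) = Real.log x - Real.log 2 :=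
      Real.log_div h.ne' (by norm_num)
    rw [e2] at h1
    nlinarith [h1, e]

lemma aux_tail_le_half (θ : ℝ) {n : ℕ} (hn : 2 ≤ n) :
    ∑ m ∈ Finset.Icc ((n + 1) / 2 + 1) n, piBD θ n m ≤ 1 / 2 := by
  set a := (n + 1) / 2 with hadef
  have ha2 : n ≤ 2 * a := by omega
  have hsym : ∑ m ∈ Finset.Icc (a + 1) n, piBD θ n m
      = ∑ m ∈ Finset.Icc 0 (n - (a + 1)), piBD θ n m := by
    apply Finset.sum_nbij' (fun m => n - m) (fun m => n - m)
    · intro m hm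
      simp only [Finset.mem_Icc] at hm ⊢
      omega
    · intro m hm
      simp only [Finset.mem_Icc] at hm ⊢
      omega
    · intro m hm
      simp only [Finset.mem_Icc] at hm
      omega
    · intro m hm
      simp only [Finset.mem_Icc] at hm
      omega
    · intro m hm
      simp only [Finset.mem_Icc] at hm
      exact (aux_piBD_symm θ hm.2).symm
  have hdisj : Disjoint (Finset.Icc (a + 1) n) (Finset.Icc 0 (n - (a + 1))) := by
    apply Finset.disjoint_left.mpr
    intro m hm hm'
    simp only [Finset.mem_Icc] at hm hm'
    omega
  have hsub : Finset.Icc (a + 1) n ∪ Finset.Icc 0 (n - (a + 1)) ⊆ Finset.range (n + 1) := by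
    intro m hm
    simp only [Finset.mem_union, Finset.mem_Icc] at hm
    rw [Finset.mem_range]
    omega
  have hle : ∑ m ∈ Finset.Icc (a + 1) n ∪ Finset.Icc 0 (n - (a + 1)), piBD θ n m ≤ 1 := by
    rw [← aux_sum_piBD θ n]
    exact Finset.sum_le_sum_of_subset_of_nonneg hsub
      (fun m _ _ => aux_piBD_nonneg θ n m)
  rw [Finset.sum_union hdisj, ← hsym] at hle
  linarith

lemma aux_ent_lb (θ : ℝ) {n : ℕ} (hn : 2 ≤ n) (g : ℕ → ℝ) (hg0 : ∀ m, 0 ≤ g m)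
    (hsupp : ∀ m, m ≤ (n + 1) / 2 → g m = 0)
    (hnorm : (∑ m ∈ Finset.range (n + 1), g m * piBD θ n m) = 1) :
    Real.log 2 ≤ entBD θ n g := by
  set a := (n + 1) / 2 with hadef
  set S := Finset.Icc (a + 1) n with hSdef
  have hS : S ⊆ Finset.range (n + 1) := by
    intro m hm
    rw [hSdef, Finset.mem_Icc] at hm
    rw [Finset.mem_range]
    omega
  have hout : ∀ m ∈ Finset.range (n + 1), m ∉ S → g m = 0 := by
    intro m hm hns
    rw [Finset.mem_range] at hm
    rw [hSdef, Finset.mem_Icc] at hns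
    exact hsupp m (by omega)
  have hsum1 : ∑ m ∈ S, g m * piBD θ n m = 1 := by
    rw [← hnorm]
    exact Finset.sum_subset hS (fun m hm hns => by rw [hout m hm hns, zero_mul])
  have hentS : entBD θ n g = ∑ m ∈ S, g m * Real.log (g m) * piBD θ n m := by
    unfold entBD
    exact (Finset.sum_subset hS
      (fun m hm hns => by rw [hout m hm hns, zero_mul, zero_mul])).symm
  have htan : ∀ m ∈ S, (g m * Real.log 2 + g m - 2) * piBD θ n m
      ≤ g m * Real.log (g m) * piBD θ n m := by
    intro m _
    exact mul_le_mul_of_nonneg_right (aux_tangent (g m) (hg0 m)) (aux_piBD_nonneg θ n m)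
  have hsplit : ∑ m ∈ S, (g m * Real.log 2 + g m - 2) * piBD θ n m
      = Real.log 2 * (∑ m ∈ S, g m * piBD θ n m) + (∑ m ∈ S, g m * piBD θ n m)
        - 2 * (∑ m ∈ S, piBD θ n m) := by
    rw [Finset.mul_sum, Finset.mul_sum, ← Finset.sum_add_distrib, ← Finset.sum_sub_distrib]
    congr 1
    funext m
    ring
  have htail := aux_tail_le_half θ hn
  rw [← hSdef] at htail
  have h1 : Real.log 2 * 1 + 1 - 2 * (1 / 2) ≤ ∑ m ∈ S, (g m * Real.log 2 + g m - 2) * piBD θ n m := by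
    rw [hsplit, hsum1]
    nlinarith [htail]
  calc Real.log 2 = Real.log 2 * 1 + 1 - 2 * (1 / 2) := by ring
    _ ≤ ∑ m ∈ S, (g m * Real.log 2 + g m - 2) * piBD θ n m := h1
    _ ≤ ∑ m ∈ S, g m * Real.log (g m) * piBD θ n m := Finset.sum_le_sum htan
    _ = entBD θ n g := hentS.symm

/-! ### The small-n density -/

noncomputable def auxgsm (θ : ℝ) (n : ℕ) : ℕ → ℝ := fun m =>
  if m ∈ Finset.Icc ((n + 1) / 2 + 1) n
  then (∑ k ∈ Finset.Icc ((n + 1) / 2 + 1) n, piBD θ n k)⁻¹ else 0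

lemma aux_small (θ : ℝ) {n : ℕ} (hn : 2 ≤ n) :
    (∀ m, 0 ≤ auxgsm θ n m)
    ∧ (∑ m ∈ Finset.range (n + 1), auxgsm θ n m * piBD θ n m) = 1
    ∧ Real.log 2 ≤ entBD θ n (auxgsm θ n) := by
  have hn0 : 0 < n := by omega
  set S := Finset.Icc ((n + 1) / 2 + 1) n with hSdef
  have hne : S.Nonempty := by
    refine ⟨n, ?_⟩
    rw [hSdef, Finset.mem_Icc]
    omega
  have hP : 0 < ∑ k ∈ S, piBD θ n k := by
    apply Finset.sum_pos _ hne
    intro k hk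
    rw [hSdef, Finset.mem_Icc] at hk
    exact aux_piBD_pos θ hn0 hk.2
  have hg0 : ∀ m, 0 ≤ auxgsm θ n m := by
    intro m
    unfold auxgsm
    rw [← hSdef]
    split
    · exact inv_nonneg.mpr hP.le
    · exact le_refl 0
  have hSsub : S ⊆ Finset.range (n + 1) := by
    intro m hm
    rw [hSdef, Finset.mem_Icc] at hm
    rw [Finset.mem_range]
    omega
  have hgS : ∀ m ∈ S, auxgsm θ n m = (∑ k ∈ S, piBD θ n k)⁻¹ := by
    intro m hm
    unfold auxgsm
    rw [← hSdef, if_pos hm]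
  have hgout : ∀ m, m ∉ S → auxgsm θ n m = 0 := by
    intro m hm
    unfold auxgsm
    rw [← hSdef, if_neg hm]
  have hnorm : (∑ m ∈ Finset.range (n + 1), auxgsm θ n m * piBD θ n m) = 1 := by
    rw [← Finset.sum_subset hSsub
      (fun m _ hns => by rw [hgout m hns, zero_mul])]
    rw [Finset.sum_congr rfl (fun m hm => by rw [hgS m hm])]
    rw [← Finset.mul_sum]
    exact inv_mul_cancel₀ hP.ne'
  refine ⟨hg0, hnorm, ?_⟩
  apply aux_ent_lb θ hn _ hg0 _ hnorm
  intro m hm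
  apply hgout
  rw [hSdef, Finset.mem_Icc]
  omega
/-! ### The main construction for large n -/

set_option maxHeartbeats 1000000 in
lemma aux_main_large (θ : ℝ) (n : ℕ) (hn : auxn0 θ ≤ n) :
    ∃ g : ℕ → ℝ, (∀ m, 0 ≤ g m)
      ∧ (∑ m ∈ Finset.range (n + 1), g m * piBD θ n m) = 1
      ∧ Real.log 2 ≤ entBD θ n g
      ∧ DBD θ n g ≤ 18 * auxCF θ * ((n : ℝ) ^ (-(1 : ℝ) / 2)) := by
  have habs : 0 ≤ |θ| := abs_nonneg θ
  set t : ℝ := (n : ℝ) ^ ((1 : ℝ) / 4) with htdef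
  have ht00 : 0 ≤ t := by rw [htdef]; positivity
  have hx4 : ((n : ℝ)) = t ^ 4 := by
    rw [htdef, ← Real.rpow_natCast ((n : ℝ) ^ ((1 : ℝ) / 4)) 4,
      ← Real.rpow_mul (Nat.cast_nonneg n)]
    norm_num
  have hta : 2100 * (|θ| + 21) ≤ t := by
    have h1 : ((2100 * (⌈|θ|⌉₊ + 21) : ℕ) : ℝ) ^ 4 ≤ t ^ 4 := by
      rw [← hx4]
      have := Nat.cast_le (α := ℝ).mpr hn
      unfold auxn0 at this
      push_cast at this ⊢
      exact_mod_cast this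
    have h2 : ((2100 * (⌈|θ|⌉₊ + 21) : ℕ) : ℝ) ≤ t :=
      le_of_pow_le_pow_left₀ (by norm_num) ht00 h1
    have h3 : 2100 * (|θ| + 21) ≤ ((2100 * (⌈|θ|⌉₊ + 21) : ℕ) : ℝ) := by
      push_cast
      nlinarith [Nat.le_ceil |θ|]
    linarith
  have ht1 : (44100 : ℝ) ≤ t := aux_num1 habs hta
  have ht0 : (0 : ℝ) < t := by linarith
  have hx0 : (0 : ℝ) < (n : ℝ) := by rw [hx4]; positivity
  have hn0 : 0 < n := by exact_mod_cast hx0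
  have ht3n : (n : ℝ) ^ ((3 : ℝ) / 4) = t ^ 3 := by
    rw [htdef, ← Real.rpow_natCast ((n : ℝ) ^ ((1 : ℝ) / 4)) 3,
      ← Real.rpow_mul (Nat.cast_nonneg n)]
    norm_num
  have ht30 : (0 : ℝ) < t ^ 3 := by positivity
  have ht32 : (2 : ℝ) ≤ t ^ 3 := by
    have h := pow_le_pow_left₀ (by norm_num : (0:ℝ) ≤ 44100) ht1 3
    norm_num at h
    linarith
  -- the window
  set a : ℕ := (n + 1) / 2 with hadef
  set K : ℕ := ⌊(n : ℝ) ^ ((3 : ℝ) / 4)⌋₊ with hKdef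
  have hKt3 : (K : ℝ) ≤ t ^ 3 := by
    rw [hKdef, ← ht3n]
    exact Nat.floor_le (by positivity)
  have hKlo : t ^ 3 / 2 ≤ (K : ℝ) := by
    have h := Nat.lt_floor_add_one ((n : ℝ) ^ ((3 : ℝ) / 4))
    rw [ht3n] at h
    rw [hKdef, ← ht3n] at *
    nlinarith [h]
  have hK0 : 0 < K := by
    have : (0 : ℝ) < (K : ℝ) := by nlinarith
    exact_mod_cast this
  have hKR0 : (0 : ℝ) < (K : ℝ) := by exact_mod_cast hK0
  have haR : ((a : ℕ) : ℝ) ≤ ((n : ℝ) + 1) / 2 := by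
    rw [hadef]
    have h := Nat.cast_div_le (α := ℝ) (m := n + 1) (n := 2)
    push_cast at h
    exact_mod_cast h
  have ha2 : (n : ℝ) / 2 ≤ (a : ℝ) := by
    have h : n ≤ 2 * a := by omega
    have := Nat.cast_le (α := ℝ).mpr h
    push_cast at this
    linarith
  have haK : (a : ℝ) + 2 * K ≤ (n : ℝ) := by
    have h1 : (a : ℝ) + 2 * K ≤ ((n : ℝ) + 1) / 2 + 2 * t ^ 3 := by linarith
    have h2 : ((n : ℝ) + 1) / 2 + 2 * t ^ 3 ≤ (n : ℝ) := by
      rw [hx4]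
      nlinarith
    linarith
  have haKn : a + 2 * K ≤ n := by exact_mod_cast haK
  have hn2 : 2 ≤ n := by
    have h := pow_le_pow_left₀ (by norm_num : (0:ℝ) ≤ 44100) ht1 4
    norm_num at h
    have h2 : (2 : ℝ) ≤ (n : ℝ) := by rw [hx4]; linarith
    exact_mod_cast h2
  -- window membership facts
  have hwin : ∀ m : ℕ, a ≤ m → m ≤ a + 2 * K →
      (n : ℝ) / 2 ≤ (m : ℝ) ∧ (m : ℝ) ≤ (n : ℝ) / 2 + 1 / 2 + 2 * t ^ 3 := by
    intro m h1 h2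
    have hc1 : (a : ℝ) ≤ (m : ℝ) := by exact_mod_cast h1
    have hc2 : (m : ℝ) ≤ (a : ℝ) + 2 * K := by exact_mod_cast h2
    constructor
    · linarith
    · have : (m : ℝ) ≤ ((n : ℝ) + 1) / 2 + 2 * t ^ 3 := by linarith
      linarith
  set ε : ℝ := auxcE θ / t ^ 3 with hεdef
  have hε0 : 0 ≤ ε := by
    rw [hεdef]
    exact (div_pos (aux_cE_pos θ) ht30).le
  -- one-step bounds
  have hstep : ∀ m : ℕ, a ≤ m → m < a + 2 * K →
      piBD θ n (m + 1) ≤ Real.exp ε * piBD θ n m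
      ∧ piBD θ n m ≤ Real.exp ε * piBD θ n (m + 1) := by
    intro m h1 h2
    have hw := hwin m h1 (by omega)
    have hcore := aux_core θ n m t htdef hta hw.1 hw.2
    have hmn : m < n := by omega
    have hid := aux_ratio_id θ hn0 hmn
    have hm1pos : (0 : ℝ) < (m : ℝ) + 1 := by positivity
    have heq : piBD θ n (m + 1) = piBD θ n m
        * ((((n : ℝ) - m) / ((m : ℝ) + 1))
          * Real.exp ((n : ℝ) * (U0 θ n (((m : ℝ) + 1) / n) - U0 θ n ((m : ℝ) / n)))) := by
      have h := hid
      field_simp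
      linarith [h]
    constructor
    · rw [heq]
      calc piBD θ n m * ((((n : ℝ) - m) / ((m : ℝ) + 1))
            * Real.exp ((n : ℝ) * (U0 θ n (((m : ℝ) + 1) / n) - U0 θ n ((m : ℝ) / n))))
          ≤ piBD θ n m * Real.exp ε := by
            rw [hεdef]
            exact mul_le_mul_of_nonneg_left hcore.1 (aux_piBD_nonneg θ n m)
        _ = Real.exp ε * piBD θ n m := by ring
    · have hlow : piBD θ n m * Real.exp (-ε) ≤ piBD θ n (m + 1) := by
        rw [heq]
        rw [hεdef]
        exact mul_le_mul_of_nonneg_left hcore.2.1 (aux_piBD_nonneg θ n m)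
      have h := mul_le_mul_of_nonneg_left hlow (Real.exp_pos ε).le
      calc piBD θ n m = Real.exp ε * (piBD θ n m * Real.exp (-ε)) := by
            rw [show Real.exp ε * (piBD θ n m * Real.exp (-ε))
              = piBD θ n m * (Real.exp ε * Real.exp (-ε)) by ring, ← Real.exp_add]
            simp
        _ ≤ Real.exp ε * piBD θ n (m + 1) := h
  -- flatness chain
  have hchain : ∀ i : ℕ, i ≤ 2 * K →
      piBD θ n (a + i) ≤ Real.exp (i * ε) * piBD θ n a
      ∧ piBD θ n a ≤ Real.exp (i * ε) * piBD θ n (a + i) := by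
    intro i
    induction i with
    | zero => intro _; simp
    | succ i ih =>
      intro hi
      have hih := ih (by omega)
      have hs := hstep (a + i) (by omega) (by omega)
      have hee : ((i : ℝ) + 1) * ε = (i : ℝ) * ε + ε := by ring
      constructor
      · calc piBD θ n (a + (i + 1)) = piBD θ n ((a + i) + 1) := by rw [Nat.add_assoc]
          _ ≤ Real.exp ε * piBD θ n (a + i) := hs.1
          _ ≤ Real.exp ε * (Real.exp (i * ε) * piBD θ n a) :=
              mul_le_mul_of_nonneg_left hih.1 (Real.exp_pos ε).le
          _ = Real.exp (((i : ℕ) + 1 : ℕ) * ε) * piBD θ n a := by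
              push_cast
              rw [hee, Real.exp_add]
              ring
      · calc piBD θ n a ≤ Real.exp (i * ε) * piBD θ n (a + i) := hih.2
          _ ≤ Real.exp (i * ε) * (Real.exp ε * piBD θ n ((a + i) + 1)) :=
              mul_le_mul_of_nonneg_left hs.2 (Real.exp_pos _).le
          _ = Real.exp (((i : ℕ) + 1 : ℕ) * ε) * piBD θ n (a + (i + 1)) := by
              rw [← Nat.add_assoc]
              push_cast
              rw [hee, Real.exp_add]
              ring
  have hKε : (K : ℝ) * ε ≤ auxcE θ := by
    rw [hεdef, show (K : ℝ) * (auxcE θ / t ^ 3) = auxcE θ * ((K : ℝ) / t ^ 3) by ring]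
    have h1 : (K : ℝ) / t ^ 3 ≤ 1 := by
      rw [div_le_one ht30]
      exact hKt3
    nlinarith [aux_cE_pos θ, (aux_cE_pos θ).le]
  have hpair : ∀ i j : ℕ, i ≤ 2 * K → j ≤ 2 * K →
      piBD θ n (a + i) ≤ auxCF θ * piBD θ n (a + j) := by
    intro i j hi hj
    have hci := (hchain i hi).1
    have hcj := (hchain j hj).2
    have hij : (i : ℝ) * ε + (j : ℝ) * ε ≤ 4 * auxcE θ := by
      have h1 : (i : ℝ) ≤ 2 * K := by exact_mod_cast hi
      have h2 : (j : ℝ) ≤ 2 * K := by exact_mod_cast hj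
      nlinarith [mul_le_mul_of_nonneg_right h1 hε0, mul_le_mul_of_nonneg_right h2 hε0]
    calc piBD θ n (a + i) ≤ Real.exp (i * ε) * piBD θ n a := hci
      _ ≤ Real.exp (i * ε) * (Real.exp (j * ε) * piBD θ n (a + j)) :=
          mul_le_mul_of_nonneg_left hcj (Real.exp_pos _).le
      _ = Real.exp ((i : ℝ) * ε + (j : ℝ) * ε) * piBD θ n (a + j) := by
          rw [Real.exp_add]; ring
      _ ≤ auxCF θ * piBD θ n (a + j) := by
          apply mul_le_mul_of_nonneg_right _ (aux_piBD_nonneg θ n _)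
          unfold auxCF
          exact Real.exp_le_exp.mpr hij
  -- the test function
  set φ : ℕ → ℝ := fun m' => min 1 (max 0 (((m' : ℝ) - (a : ℝ)) / (K : ℝ))) with hφdef
  have hφ0 : ∀ m', 0 ≤ φ m' := by
    intro m'
    rw [hφdef]
    exact le_min (by norm_num) (le_max_left 0 _)
  have hφ1 : ∀ m', φ m' ≤ 1 := by
    intro m'
    rw [hφdef]
    exact min_le_left _ _
  have hφzero : ∀ m', m' ≤ a → φ m' = 0 := by
    intro m' hm'
    rw [hφdef]
    have h1 : ((m' : ℝ) - (a : ℝ)) / (K : ℝ) ≤ 0 := by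
      apply div_nonpos_of_nonpos_of_nonneg _ hKR0.le
      have : (m' : ℝ) ≤ (a : ℝ) := by exact_mod_cast hm'
      linarith
    simp only [max_eq_left h1]
    exact min_eq_right (by norm_num)
  have hφone : ∀ m', a + K ≤ m' → φ m' = 1 := by
    intro m' hm'
    rw [hφdef]
    apply min_eq_left
    apply le_max_of_le_right
    rw [le_div_iff₀ hKR0]
    have : ((a : ℝ) + (K : ℝ)) ≤ (m' : ℝ) := by exact_mod_cast hm'
    linarith
  have hφramp : ∀ m', a ≤ m' → m' < a + K → φ (m' + 1) - φ m' = 1 / (K : ℝ) := by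
    intro m' h1 h2
    have hc1 : (a : ℝ) ≤ (m' : ℝ) := by exact_mod_cast h1
    have hc2 : (m' : ℝ) + 1 ≤ (a : ℝ) + (K : ℝ) := by exact_mod_cast h2
    have e1 : φ m' = ((m' : ℝ) - (a : ℝ)) / (K : ℝ) := by
      rw [hφdef]
      have hnn : 0 ≤ ((m' : ℝ) - (a : ℝ)) / (K : ℝ) := by
        apply div_nonneg _ hKR0.le
        linarith
      simp only [max_eq_right hnn]
      apply min_eq_right
      rw [div_le_one hKR0]
      linarith
    have e2 : φ (m' + 1) = (((m' : ℝ) + 1) - (a : ℝ)) / (K : ℝ) := by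
      rw [hφdef]
      push_cast
      have hnn : 0 ≤ ((m' : ℝ) + 1 - (a : ℝ)) / (K : ℝ) := by
        apply div_nonneg _ hKR0.le
        linarith
      simp only [max_eq_right hnn]
      apply min_eq_right
      rw [div_le_one hKR0]
      linarith
    rw [e1, e2, div_sub_div_same]
    congr 1
    ring
  set N : ℝ := ∑ m' ∈ Finset.range (n + 1), φ m' ^ 2 * piBD θ n m' with hNdef
  have hNlb : piBD θ n (a + K) ≤ N := by
    calc piBD θ n (a + K) = φ (a + K) ^ 2 * piBD θ n (a + K) := by
          rw [hφone (a + K) le_rfl]; ring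
      _ ≤ N :=
        Finset.single_le_sum (f := fun m' => φ m' ^ 2 * piBD θ n m')
          (fun m' _ => mul_nonneg (sq_nonneg _) (aux_piBD_nonneg θ n m'))
          (show a + K ∈ Finset.range (n + 1) by rw [Finset.mem_range]; omega)
  have hN0 : 0 < N := lt_of_lt_of_le (aux_piBD_pos θ hn0 (by omega)) hNlb
  refine ⟨fun m' => φ m' ^ 2 / N, ?_, ?_, ?_, ?_⟩
  · intro m'
    positivity
  · rw [Finset.sum_congr rfl (fun m' _ => div_mul_eq_mul_div (φ m' ^ 2) N (piBD θ n m')),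
      ← Finset.sum_div, ← hNdef, div_self hN0.ne']
  · refine aux_ent_lb θ hn2 _ (fun m' => by positivity) (fun m' hm' => ?_) ?_
    · rw [hφzero m' (by omega)]
      norm_num
    · rw [Finset.sum_congr rfl (fun m' _ => div_mul_eq_mul_div (φ m' ^ 2) N (piBD θ n m')),
        ← Finset.sum_div, ← hNdef, div_self hN0.ne']
  · -- Dirichlet form bound
    have hsqrtg : ∀ m', Real.sqrt (φ m' ^ 2 / N) = φ m' / Real.sqrt N := by
      intro m'
      rw [Real.sqrt_div (sq_nonneg _), Real.sqrt_sq (hφ0 m')]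
    have hsub : Finset.Ico a (a + K) ⊆ Finset.range n := by
      intro m' hm'
      rw [Finset.mem_Ico] at hm'
      rw [Finset.mem_range]
      omega
    have hterm0 : ∀ m' ∈ Finset.range n, m' ∉ Finset.Ico a (a + K) →
        bBD θ n m' * (Real.sqrt (φ (m' + 1) ^ 2 / N) - Real.sqrt (φ m' ^ 2 / N)) ^ 2
          * piBD θ n m' = 0 := by
      intro m' _ hm'
      rw [Finset.mem_Ico] at hm'
      have heq : φ (m' + 1) = φ m' := by
        rcases Nat.lt_or_ge m' a with h | h
        · rw [hφzero m' (by omega), hφzero (m' + 1) (by omega)]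
        · have h2 : a + K ≤ m' := by omega
          rw [hφone m' h2, hφone (m' + 1) (by omega)]
      rw [hsqrtg, hsqrtg, heq, sub_self]
      ring
    have hrestrict : DBD θ n (fun m' => φ m' ^ 2 / N)
        = (1 / 2) * ∑ m' ∈ Finset.Ico a (a + K),
            bBD θ n m' * (Real.sqrt (φ (m' + 1) ^ 2 / N) - Real.sqrt (φ m' ^ 2 / N)) ^ 2
              * piBD θ n m' := by
      unfold DBD
      rw [Finset.sum_subset hsub hterm0]
    have hptb : ∀ m' ∈ Finset.Ico a (a + K),
        bBD θ n m' * (Real.sqrt (φ (m' + 1) ^ 2 / N) - Real.sqrt (φ m' ^ 2 / N)) ^ 2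
          * piBD θ n m'
        ≤ (9 * (n : ℝ) * ((1 / (K : ℝ) ^ 2) / N)) * piBD θ n m' := by
      intro m' hm'
      rw [Finset.mem_Ico] at hm'
      have hw := hwin m' hm'.1 (by omega)
      have hcore := aux_core θ n m' t htdef hta hw.1 hw.2
      have hdiff : (Real.sqrt (φ (m' + 1) ^ 2 / N) - Real.sqrt (φ m' ^ 2 / N)) ^ 2
          = (1 / (K : ℝ) ^ 2) / N := by
        rw [hsqrtg, hsqrtg, div_sub_div_same, hφramp m' hm'.1 hm'.2, div_pow,
          Real.sq_sqrt hN0.le]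
        congr 1
        rw [div_pow]
        norm_num
      rw [hdiff]
      apply mul_le_mul_of_nonneg_right _ (aux_piBD_nonneg θ n m')
      apply mul_le_mul_of_nonneg_right hcore.2.2
      positivity
    have hsum_ramp : ∑ m' ∈ Finset.Ico a (a + K), piBD θ n m'
        ≤ auxCF θ * N := by
      have h1 : ∑ m' ∈ Finset.Ico a (a + K), piBD θ n m'
          = ∑ i ∈ Finset.range K, piBD θ n (a + i) := by
        rw [Finset.sum_Ico_eq_sum_range, show a + K - a = K from by omega]
      have h2 : ∑ i ∈ Finset.range K, piBD θ n (a + i)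
          ≤ ∑ i ∈ Finset.range K, auxCF θ * piBD θ n (a + (K + i)) := by
        apply Finset.sum_le_sum
        intro i hi
        rw [Finset.mem_range] at hi
        exact hpair i (K + i) (by omega) (by omega)
      have h3 : ∑ i ∈ Finset.range K, auxCF θ * piBD θ n (a + (K + i))
          = auxCF θ * ∑ m' ∈ Finset.Ico (a + K) (a + K + K), piBD θ n m' := by
        rw [← Finset.mul_sum]
        congr 1
        rw [Finset.sum_Ico_eq_sum_range, show a + K + K - (a + K) = K from by omega]
        apply Finset.sum_congr rfl
        intro i _
        congr 1
        omega
      have h4 : ∑ m' ∈ Finset.Ico (a + K) (a + K + K), piBD θ n m' ≤ N := by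
        have e : ∑ m' ∈ Finset.Ico (a + K) (a + K + K), piBD θ n m'
            = ∑ m' ∈ Finset.Ico (a + K) (a + K + K), φ m' ^ 2 * piBD θ n m' := by
          apply Finset.sum_congr rfl
          intro m' hm'
          rw [Finset.mem_Ico] at hm'
          rw [hφone m' hm'.1]
          ring
        rw [e, hNdef]
        apply Finset.sum_le_sum_of_subset_of_nonneg
        · intro m' hm'
          rw [Finset.mem_Ico] at hm'
          rw [Finset.mem_range]
          omega
        · intro m' _ _
          exact mul_nonneg (sq_nonneg _) (aux_piBD_nonneg θ n m')
      have hCF0 : 0 < auxCF θ := Real.exp_pos _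
      calc ∑ m' ∈ Finset.Ico a (a + K), piBD θ n m'
          ≤ auxCF θ * ∑ m' ∈ Finset.Ico (a + K) (a + K + K), piBD θ n m' := by
            rw [h1]; rw [h3] at h2; exact h2
        _ ≤ auxCF θ * N := mul_le_mul_of_nonneg_left h4 hCF0.le
    have hneg : (n : ℝ) ^ (-(1 : ℝ) / 2) = (t ^ 2)⁻¹ := by
      rw [show (-(1 : ℝ)) / 2 = -(1 / 2) by norm_num,
        Real.rpow_neg (Nat.cast_nonneg n)]
      congr 1
      rw [htdef, ← Real.rpow_natCast ((n : ℝ) ^ ((1 : ℝ) / 4)) 2,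
        ← Real.rpow_mul (Nat.cast_nonneg n)]
      norm_num
    have hCF0 : 0 < auxCF θ := Real.exp_pos _
    calc DBD θ n (fun m' => φ m' ^ 2 / N)
        = (1 / 2) * ∑ m' ∈ Finset.Ico a (a + K),
            bBD θ n m' * (Real.sqrt (φ (m' + 1) ^ 2 / N) - Real.sqrt (φ m' ^ 2 / N)) ^ 2
              * piBD θ n m' := hrestrict
      _ ≤ (1 / 2) * ∑ m' ∈ Finset.Ico a (a + K),
            (9 * (n : ℝ) * ((1 / (K : ℝ) ^ 2) / N)) * piBD θ n m' := by
          apply mul_le_mul_of_nonneg_left (Finset.sum_le_sum hptb) (by norm_num)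
      _ = (1 / 2) * (9 * (n : ℝ) * ((1 / (K : ℝ) ^ 2) / N))
            * ∑ m' ∈ Finset.Ico a (a + K), piBD θ n m' := by
          rw [← Finset.mul_sum]
          ring
      _ ≤ (1 / 2) * (9 * (n : ℝ) * ((1 / (K : ℝ) ^ 2) / N)) * (auxCF θ * N) := by
          apply mul_le_mul_of_nonneg_left hsum_ramp
          positivity
      _ = (9 / 2) * (n : ℝ) * auxCF θ / (K : ℝ) ^ 2 := by
          field_simp
      _ ≤ 18 * auxCF θ * ((n : ℝ) ^ (-(1 : ℝ) / 2)) := by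
          rw [hneg, hx4]
          rw [div_le_iff₀ (by positivity : (0 : ℝ) < (K : ℝ) ^ 2)]
          have hK2 : t ^ 6 / 4 ≤ (K : ℝ) ^ 2 := by nlinarith
          have ht20 : (0 : ℝ) < t ^ 2 := by positivity
          have e : 18 * auxCF θ * (t ^ 2)⁻¹ * (K : ℝ) ^ 2
              = 18 * auxCF θ * ((K : ℝ) ^ 2 / t ^ 2) := by ring
          rw [e]
          have h5 : (9 / 2) * t ^ 4 * auxCF θ ≤ 18 * auxCF θ * (t ^ 6 / 4 / t ^ 2) := by
            have e2 : t ^ 6 / 4 / t ^ 2 = t ^ 4 / 4 := by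
              field_simp
            rw [e2]
            nlinarith [hCF0]
          have h6 : 18 * auxCF θ * (t ^ 6 / 4 / t ^ 2) ≤ 18 * auxCF θ * ((K : ℝ) ^ 2 / t ^ 2) := by
            apply mul_le_mul_of_nonneg_left _ (by positivity)
            gcongr
          linarith
/-! ### The constant for small n -/

noncomputable def auxCsm (θ : ℝ) : ℕ :=
  (Finset.range (auxn0 θ)).sup fun n => ⌈DBD θ n (auxgsm θ n) * n⌉₊

/-- The logarithmic Sobolev constant of the birth–death chain is at most of
order `n^{-1/2}`: there is a density `𝔣` with positive entropy whose Dirichlet form is at most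
`C n^{-1/2}` times its entropy. -/
theorem log_sobolev_constant_upper_bound (θ : ℝ) :
    ∃ C : ℝ, 0 < C ∧ ∀ n : ℕ, 2 ≤ n →
      ∃ g : ℕ → ℝ, (∀ m, 0 ≤ g m) ∧
        (∑ m ∈ Finset.range (n + 1), g m * piBD θ n m) = 1 ∧
        0 < entBD θ n g ∧
        DBD θ n g ≤ C * (n : ℝ) ^ (-(1 : ℝ) / 2) * entBD θ n g := by
  have hlog2 : (0 : ℝ) < Real.log 2 := Real.log_pos (by norm_num)
  have hCF0 : (0 : ℝ) < auxCF θ := Real.exp_pos _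
  obtain ⟨C, hCdef⟩ : ∃ C : ℝ, C = 18 * auxCF θ / Real.log 2 + (auxCsm θ : ℝ) / Real.log 2 + 1 :=
    ⟨_, rfl⟩
  have hLcancel : ∀ A x : ℝ, (A / Real.log 2) * x * Real.log 2 = A * x := by
    intro A x
    field_simp
  have hC1 : 18 * auxCF θ / Real.log 2 ≤ C := by
    rw [hCdef]
    have h1 : 0 ≤ (auxCsm θ : ℝ) / Real.log 2 := by positivity
    linarith
  have hC2 : (auxCsm θ : ℝ) / Real.log 2 ≤ C := by
    rw [hCdef]
    have h1 : 0 ≤ 18 * auxCF θ / Real.log 2 := by positivity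
    linarith
  have hC0 : 0 < C := by
    rw [hCdef]
    have h1 : 0 ≤ 18 * auxCF θ / Real.log 2 := by positivity
    have h2 : 0 ≤ (auxCsm θ : ℝ) / Real.log 2 := by positivity
    linarith
  refine ⟨C, hC0, ?_⟩
  intro n hn
  have hx0 : (0 : ℝ) < (n : ℝ) := by positivity
  have hrp0 : (0 : ℝ) < (n : ℝ) ^ (-(1 : ℝ) / 2) := Real.rpow_pos_of_pos hx0 _
  rcases lt_or_ge n (auxn0 θ) with hsmall | hlarge
  · -- small n
    obtain ⟨hg0, hnorm, hent⟩ := aux_small θ hn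
    refine ⟨auxgsm θ n, hg0, hnorm, by linarith, ?_⟩
    have hD0 : 0 ≤ DBD θ n (auxgsm θ n) := by
      unfold DBD
      apply mul_nonneg (by norm_num)
      apply Finset.sum_nonneg
      intro m hm
      rw [Finset.mem_range] at hm
      apply mul_nonneg (mul_nonneg _ (sq_nonneg _)) (aux_piBD_nonneg θ n m)
      unfold bBD
      apply mul_nonneg _ (Real.exp_pos _).le
      have : (m : ℝ) ≤ (n : ℝ) := by exact_mod_cast hm.le
      linarith
    have h1 : DBD θ n (auxgsm θ n) * n ≤ (auxCsm θ : ℝ) := by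
      calc DBD θ n (auxgsm θ n) * n ≤ (⌈DBD θ n (auxgsm θ n) * n⌉₊ : ℝ) := Nat.le_ceil _
        _ ≤ (auxCsm θ : ℝ) := by
            have := Finset.le_sup (f := fun n => ⌈DBD θ n (auxgsm θ n) * n⌉₊)
              (Finset.mem_range.mpr hsmall)
            exact_mod_cast this
    have h2 : ((n : ℝ))⁻¹ ≤ (n : ℝ) ^ (-(1 : ℝ) / 2) := by
      rw [show (-(1 : ℝ)) / 2 = -(1 / 2) by norm_num]
      rw [show ((n : ℝ))⁻¹ = (n : ℝ) ^ (-(1 : ℝ)) by rw [Real.rpow_neg_one]]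
      apply Real.rpow_le_rpow_of_exponent_le
      · exact_mod_cast hn.trans (le_refl n) |>.trans' (by norm_num)
      · norm_num
    have h3 : DBD θ n (auxgsm θ n) ≤ (auxCsm θ : ℝ) * (n : ℝ) ^ (-(1 : ℝ) / 2) := by
      have h4 : DBD θ n (auxgsm θ n) ≤ (auxCsm θ : ℝ) * ((n : ℝ))⁻¹ := by
        rw [show (auxCsm θ : ℝ) * ((n : ℝ))⁻¹ = (auxCsm θ : ℝ) / (n : ℝ) from
          (div_eq_mul_inv _ _).symm, le_div_iff₀ hx0]
        exact h1
      calc DBD θ n (auxgsm θ n) ≤ (auxCsm θ : ℝ) * ((n : ℝ))⁻¹ := h4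
        _ ≤ (auxCsm θ : ℝ) * (n : ℝ) ^ (-(1 : ℝ) / 2) :=
            mul_le_mul_of_nonneg_left h2 (Nat.cast_nonneg _)
    calc DBD θ n (auxgsm θ n) ≤ (auxCsm θ : ℝ) * (n : ℝ) ^ (-(1 : ℝ) / 2) := h3
      _ = ((auxCsm θ : ℝ) / Real.log 2) * (n : ℝ) ^ (-(1 : ℝ) / 2) * Real.log 2 :=
          (hLcancel _ _).symm
      _ ≤ C * (n : ℝ) ^ (-(1 : ℝ) / 2) * entBD θ n (auxgsm θ n) := by
          apply mul_le_mul _ hent hlog2.le _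
          · apply mul_le_mul_of_nonneg_right hC2 hrp0.le
          · positivity
  · -- large n
    obtain ⟨g, hg0, hnorm, hent, hD⟩ := aux_main_large θ n hlarge
    refine ⟨g, hg0, hnorm, by linarith, ?_⟩
    calc DBD θ n g ≤ 18 * auxCF θ * ((n : ℝ) ^ (-(1 : ℝ) / 2)) := hD
      _ = (18 * auxCF θ / Real.log 2) * (n : ℝ) ^ (-(1 : ℝ) / 2) * Real.log 2 :=
          (hLcancel _ _).symm
      _ ≤ C * (n : ℝ) ^ (-(1 : ℝ) / 2) * entBD θ n g := by
          apply mul_le_mul _ hent hlog2.le _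
          · apply mul_le_mul_of_nonneg_right hC1 hrp0.le
          · positivity

end
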